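/- Let C be a unary covering of a finite nonempty set U. For every X ∈ F, the set FL(Xᶜ) is the pseudocomplement of X in the lattice (F, ⊆): FL(Xᶜ) ∈ F, FL(X ∩ FL(Xᶜ)) = ∅ (indeed X ∩ FL(Xᶜ) = ∅), and for every Y ∈ F with FL(X ∩ Y) = ∅ one has Y ⊆ FL(Xᶜ). -/

import Mathlib

open Set

variable {U : Type*}

/-- The first-type lower approximation w.r.t. the covering `C`. -/
def fL (C : Set (Set U)) (X : Set U) : Set U := ⋃₀ {K | K ∈ C ∧ K ⊆ X}

/-- The fixed point set of covering. -/
def fFix (C : Set (Set U)) : Set (Set U) := {X | fL C X = X}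

/-- `K` is reducible in `C` if it is a union of some sets in `C \ {K}`. -/
def covReducible (C : Set (Set U)) (K : Set U) : Prop := ∃ S ⊆ C \ {K}, K = ⋃₀ S

/-- The minimal description of `x`. -/
def md (C : Set (Set U)) (x : U) : Set (Set U) :=
  {K | K ∈ C ∧ x ∈ K ∧ ∀ S ∈ C, x ∈ S → S ⊆ K → S = K}

/-- `C` is unary if `|md x| = 1` for every `x`. -/
def isUnary (C : Set (Set U)) : Prop := ∀ x : U, ∃! K : Set U, K ∈ md C x

/-- The join-irreducible elements of the lattice `(fFix C, ⊆)`. -/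
def jIrr (C : Set (Set U)) : Set (Set U) :=
  {A | A ∈ fFix C ∧ ∀ X ∈ fFix C, ∀ Y ∈ fFix C, A = X ∪ Y → A = X ∨ A = Y}

lemma exists_md_subset [Finite U] (C : Set (Set U)) {x : U} {K : Set U}
    (hK : K ∈ C) (hx : x ∈ K) : ∃ M ∈ md C x, M ⊆ K := by
  have hfin : ({S | S ∈ C ∧ x ∈ S ∧ S ⊆ K} : Set (Set U)).Finite := Set.toFinite _
  obtain ⟨M, hM, hmin'⟩ := hfin.exists_minimalFor id _ ⟨K, hK, hx, le_refl _⟩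
  have hmin : ∀ S ∈ ({S | S ∈ C ∧ x ∈ S ∧ S ⊆ K} : Set (Set U)), S ⊆ M → M = S :=
    fun S hS h => le_antisymm (hmin' hS h) h
  exact ⟨M, ⟨hM.1, hM.2.1, fun S hS hxS hSM =>
    (hmin S ⟨hS, hxS, hSM.trans hM.2.2⟩ hSM).symm⟩, hM.2.2⟩

/-- if `C` is unary then, for every `X ∈ F`, `FL(Xᶜ)` is the
pseudocomplement of `X` in the lattice `(F, ⊆)` (whose meet is
`(X, Y) ↦ FL(X ∩ Y)` and least element is `∅`). -/
theorem stmt16 [Fintype U] [Nonempty U] (C : Set (Set U))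
    (hne : ∀ K ∈ C, K.Nonempty) (hcov : ⋃₀ C = Set.univ)
    (hunary : isUnary C) (X : Set U) (hX : X ∈ fFix C) :
    fL C Xᶜ ∈ fFix C ∧ X ∩ fL C Xᶜ = ∅ ∧ fL C (X ∩ fL C Xᶜ) = ∅ ∧
    ∀ Y ∈ fFix C, fL C (X ∩ Y) = ∅ → Y ⊆ fL C Xᶜ := by
  have hfix : fL C Xᶜ ∈ fFix C := by
    apply subset_antisymm
    · exact sUnion_subset fun K hK => hK.2
    · intro w hw
      obtain ⟨K, ⟨hKC, hKsub⟩, hwK⟩ := hw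
      exact ⟨K, ⟨hKC, subset_sUnion_of_mem ⟨hKC, hKsub⟩⟩, hwK⟩
  have hdisj : X ∩ fL C Xᶜ = ∅ := by
    apply eq_empty_of_subset_empty
    intro w ⟨hwX, hw⟩
    obtain ⟨K, ⟨hKC, hKsub⟩, hwK⟩ := hw
    exact (hKsub hwK) hwX
  refine ⟨hfix, hdisj, ?_, ?_⟩
  · rw [hdisj]
    apply eq_empty_of_subset_empty
    apply sUnion_subset
    intro K ⟨hKC, hKsub⟩
    exact hKsub
  · intro Y hY hYmeet y hyY
    rw [← hY] at hyY
    obtain ⟨K, ⟨hKC, hKsub⟩, hyK⟩ := hyY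
    obtain ⟨M, hM, hMK⟩ := exists_md_subset C hKC hyK
    refine ⟨M, ⟨hM.1, ?_⟩, hM.2.1⟩
    intro z hzM
    by_contra hzX
    simp only [mem_compl_iff, not_not] at hzX
    rw [← hX] at hzX
    obtain ⟨K₂, ⟨hK₂C, hK₂sub⟩, hzK₂⟩ := hzX
    obtain ⟨N, hN, hNK₂⟩ := exists_md_subset C hK₂C hzK₂
    obtain ⟨N', hN', hN'M⟩ := exists_md_subset C hM.1 hzM
    obtain ⟨W, _, hW⟩ := hunary z
    have hNN' : N = N' := (hW N hN).trans (hW N' hN').symm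
    have hNsub : N ⊆ X ∩ Y := fun w hw =>
      ⟨hK₂sub (hNK₂ hw), (hKsub (hMK (hN'M (hNN' ▸ hw))))⟩
    have : N ⊆ fL C (X ∩ Y) := subset_sUnion_of_mem ⟨hN.1, hNsub⟩
    rw [hYmeet] at this
    exact (hne N hN.1).ne_empty (subset_empty_iff.mp this)
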